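/- Let p be an odd prime, let n ≥ 1, and let Q be an invertible symmetric n×n matrix over the field F_p = ZMod p, defining a nondegenerate symmetric bilinear form B(x,y) = xᵀQy on V = (F_p)ⁿ. Then B is metabolic (i.e., there exists a linear subspace W ⊆ V with 2·dim W = n on which B vanishes identically) if and only if n is even and (-1)^{n(n-1)/2}·det Q is a nonzero square in F_p. -/

import Mathlib

open Matrix Finset Submodule Module Polynomial Kronecker

section helpers
variable {F : Type*} [Field F] {V : Type*} [AddCommGroup V] [Module F V]

section helpers
variable {F : Type*} [Field F] {V : Type*} [AddCommGroup V] [Module F V]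

lemma bilin_zero_right (B : V →ₗ[F] V →ₗ[F] F) (x : V) {S : Set V}
    (h : ∀ y ∈ S, B x y = 0) : ∀ z ∈ span F S, B x z = 0 := by
  intro z hz
  induction hz using Submodule.span_induction with
  | mem y hy => exact h y hy
  | zero => simp
  | add a b _ _ ha hb => simp [ha, hb]
  | smul c a _ ha => simp [ha]

lemma bilin_zero_left (B : V →ₗ[F] V →ₗ[F] F) (x : V) {S : Set V}
    (h : ∀ y ∈ S, B y x = 0) : ∀ z ∈ span F S, B z x = 0 := by
  intro z hz
  induction hz using Submodule.span_induction with
  | mem y hy => exact h y hy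
  | zero => simp
  | add a b _ _ ha hb => simp [ha, hb]
  | smul c a _ ha => simp [ha]

lemma lemB (B : V →ₗ[F] V →ₗ[F] F) (htwo : (2 : F) ≠ 0)
    (hrep : ∀ a b c : F, a ≠ 0 → b ≠ 0 → ∃ x y : F, a * x ^ 2 + b * y ^ 2 = c) :
    ∀ (m : ℕ) (b : ℕ → V) (d : ℕ → F),
      (∀ i, i < 2 * m → B (b i) (b i) = d i) →
      (∀ i, i < 2 * m → d i ≠ 0) →
      (∀ i, i < 2 * m → ∀ j, j < 2 * m → i ≠ j → B (b i) (b j) = 0) →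
      ∀ s : F, s ≠ 0 → (-1 : F) ^ m * ∏ i ∈ Finset.range (2 * m), d i = s ^ 2 →
      ∃ v u : ℕ → V,
        (∀ k, k < m → v k ∈ span F (b '' Set.Iio (2 * m)) ∧
            u k ∈ span F (b '' Set.Iio (2 * m))) ∧
        (∀ k, k < m → ∀ l, l < m →
          B (v k) (v l) = 0 ∧ B (v k) (u l) = (if k = l then 1 else 0) ∧
          B (u k) (v l) = (if k = l then 1 else 0)) := by
  intro m
  induction m with
  | zero =>
    intro b d _ _ _ s _ _
    exact ⟨0, 0, fun k hk => absurd hk (by omega), fun k hk => absurd hk (by omega)⟩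
  | succ m IH =>
    intro b d hnorm hne horth s hs hdisc
    have hd0 := hne 0 (by omega)
    have hd1 := hne 1 (by omega)
    have e00 : B (b 0) (b 0) = d 0 := hnorm 0 (by omega)
    have e11 : B (b 1) (b 1) = d 1 := hnorm 1 (by omega)
    have e01 : B (b 0) (b 1) = 0 := horth 0 (by omega) 1 (by omega) (by omega)
    have e10 : B (b 1) (b 0) = 0 := horth 1 (by omega) 0 (by omega) (by omega)
    have hprod : ∏ i ∈ Finset.range (2 * (m + 1)), d i =
        ((∏ i ∈ Finset.range (2 * m), d (i + 2)) * d 1) * d 0 := by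
      rw [show 2 * (m + 1) = 2 * m + 1 + 1 by ring,
        Finset.prod_range_succ' d (2 * m + 1), Finset.prod_range_succ']
    have hS : ∀ i, i < 2 * (m + 1) → b i ∈ span F (b '' Set.Iio (2 * (m + 1))) :=
      fun i hi => subset_span (Set.mem_image_of_mem b (Set.mem_Iio.2 hi))
    by_cases hsq : IsSquare (-(d 0 * d 1))
    · -- Case 1: split off the plane spanned by b 0, b 1
      obtain ⟨c, hc⟩ := hsq
      have hc' : c ^ 2 = -(d 0 * d 1) := by rw [sq]; exact hc.symm
      have hcne : c ≠ 0 := by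
        intro h
        rw [h] at hc'
        exact (mul_ne_zero hd0 hd1) (by
          have := hc'.symm
          rw [neg_eq_iff_eq_neg] at this
          simpa using this)
      set v0 : V := c • b 0 + d 0 • b 1 with hv0def
      have hene : -(2 * d 0 ^ 2 * d 1) ≠ 0 := by
        simp only [neg_ne_zero, mul_ne_zero_iff]
        exact ⟨⟨htwo, pow_ne_zero _ hd0⟩, hd1⟩
      set u0 : V := (-(2 * d 0 ^ 2 * d 1))⁻¹ • (c • b 0 - d 0 • b 1) with hu0def
      have hinv2 : (-(2 * d 0 ^ 2 * d 1)) * (-(2 * d 0 ^ 2 * d 1))⁻¹ = 1 :=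
        mul_inv_cancel₀ hene
      have hinvd : (d 0 * d 1) * (d 0 * d 1)⁻¹ = 1 :=
        mul_inv_cancel₀ (mul_ne_zero hd0 hd1)
      obtain ⟨v', u', hspan', hgram'⟩ := IH (fun i => b (i + 2)) (fun i => d (i + 2))
        (fun i hi => hnorm (i + 2) (by omega))
        (fun i hi => hne (i + 2) (by omega))
        (fun i hi j hj hij => horth (i + 2) (by omega) (j + 2) (by omega) (by omega))
        (s * c * (d 0 * d 1)⁻¹)
        (mul_ne_zero (mul_ne_zero hs hcne) (inv_ne_zero (mul_ne_zero hd0 hd1)))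
        (by
          have h1 : (-1 : F) ^ (m + 1) *
              (((∏ i ∈ Finset.range (2 * m), d (i + 2)) * d 1) * d 0) = s ^ 2 := by
            rw [← hprod]; exact hdisc
          rw [pow_succ] at h1
          linear_combination (c^2 * ((d 0 * d 1)⁻¹)^2) * h1 +
            ((-1:F)^m * (∏ i ∈ Finset.range (2 * m), d (i + 2)) * (d 0 * d 1) *
              ((d 0 * d 1)⁻¹)^2) * hc' +
            (-((-1:F)^m * (∏ i ∈ Finset.range (2 * m), d (i + 2)) *
              ((d 0 * d 1) * (d 0 * d 1)⁻¹ + 1))) * hinvd)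
      set S' : Set V := (fun i => b (i + 2)) '' Set.Iio (2 * m) with hS'def
      have hS'S : span F S' ≤ span F (b '' Set.Iio (2 * (m + 1))) := by
        rw [span_le]
        rintro y ⟨i, hi, rfl⟩
        have hi' : i < 2 * m := hi
        exact subset_span (Set.mem_image_of_mem b (Set.mem_Iio.2 (by omega)))
      -- expansion helpers
      have expand_r : ∀ z : V, B (b 0) z = 0 → B (b 1) z = 0 → B v0 z = 0 ∧ B u0 z = 0 := by
        intro z h0 h1
        constructor
        · rw [hv0def]
          simp only [map_add, LinearMap.add_apply, _root_.map_smul, LinearMap.smul_apply,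
            smul_eq_mul, h0, h1]
          ring
        · rw [hu0def]
          simp only [map_add, map_sub, LinearMap.add_apply, LinearMap.sub_apply,
            _root_.map_smul, LinearMap.smul_apply, smul_eq_mul, h0, h1]
          ring
      have expand_l : ∀ z : V, B z (b 0) = 0 → B z (b 1) = 0 → B z v0 = 0 ∧ B z u0 = 0 := by
        intro z h0 h1
        constructor
        · rw [hv0def]
          simp only [map_add, _root_.map_smul, smul_eq_mul, h0, h1]
          ring
        · rw [hu0def]
          simp only [map_add, map_sub, _root_.map_smul, smul_eq_mul, h0, h1]
          ring
      have hv0r : ∀ z ∈ span F S', B v0 z = 0 := by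
        apply bilin_zero_right
        rintro y ⟨i, hi, rfl⟩
        have hi' : i < 2 * m := hi
        exact (expand_r _ (horth 0 (by omega) (i + 2) (by omega) (by omega))
          (horth 1 (by omega) (i + 2) (by omega) (by omega))).1
      have hu0r : ∀ z ∈ span F S', B u0 z = 0 := by
        apply bilin_zero_right
        rintro y ⟨i, hi, rfl⟩
        have hi' : i < 2 * m := hi
        exact (expand_r _ (horth 0 (by omega) (i + 2) (by omega) (by omega))
          (horth 1 (by omega) (i + 2) (by omega) (by omega))).2
      have hv0l : ∀ z ∈ span F S', B z v0 = 0 := by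
        apply bilin_zero_left
        rintro y ⟨i, hi, rfl⟩
        have hi' : i < 2 * m := hi
        exact (expand_l _ (horth (i + 2) (by omega) 0 (by omega) (by omega))
          (horth (i + 2) (by omega) 1 (by omega) (by omega))).1
      have hu0l : ∀ z ∈ span F S', B z u0 = 0 := by
        apply bilin_zero_left
        rintro y ⟨i, hi, rfl⟩
        have hi' : i < 2 * m := hi
        exact (expand_l _ (horth (i + 2) (by omega) 0 (by omega) (by omega))
          (horth (i + 2) (by omega) 1 (by omega) (by omega))).2
      have gvv : B v0 v0 = 0 := by
        rw [hv0def]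
        simp only [map_add, LinearMap.add_apply, _root_.map_smul, LinearMap.smul_apply,
          smul_eq_mul, e00, e01, e10, e11]
        linear_combination d 0 * hc'
      have gvu : B v0 u0 = 1 := by
        rw [hv0def, hu0def]
        simp only [map_add, map_sub, LinearMap.add_apply, LinearMap.sub_apply,
          _root_.map_smul, LinearMap.smul_apply, smul_eq_mul, e00, e01, e10, e11]
        linear_combination ((-(2 * d 0 ^ 2 * d 1))⁻¹ * d 0) * hc' + hinv2
      have guv : B u0 v0 = 1 := by
        rw [hv0def, hu0def]
        simp only [map_add, map_sub, LinearMap.add_apply, LinearMap.sub_apply,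
          _root_.map_smul, LinearMap.smul_apply, smul_eq_mul, e00, e01, e10, e11]
        linear_combination ((-(2 * d 0 ^ 2 * d 1))⁻¹ * d 0) * hc' + hinv2
      refine ⟨fun k => Nat.casesOn k v0 (fun k' => v' k'),
              fun k => Nat.casesOn k u0 (fun k' => u' k'), ?_, ?_⟩
      · intro k hk
        cases k with
        | zero =>
          refine ⟨Submodule.add_mem _ (Submodule.smul_mem _ _ (hS 0 (by omega)))
              (Submodule.smul_mem _ _ (hS 1 (by omega))), ?_⟩
          exact Submodule.smul_mem _ _ (Submodule.sub_mem _
              (Submodule.smul_mem _ _ (hS 0 (by omega)))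
              (Submodule.smul_mem _ _ (hS 1 (by omega))))
        | succ k' =>
          exact ⟨hS'S (hspan' k' (by omega)).1, hS'S (hspan' k' (by omega)).2⟩
      · intro k hk l hl
        cases k with
        | zero =>
          cases l with
          | zero =>
            refine ⟨gvv, ?_, ?_⟩ <;> rw [if_pos rfl]
            · exact gvu
            · exact guv
          | succ l' =>
            have h1 := (hspan' l' (by omega)).1
            have h2 := (hspan' l' (by omega)).2
            refine ⟨hv0r _ h1, ?_, ?_⟩ <;> rw [if_neg (by omega : ¬ 0 = l' + 1)]
            · exact hv0r _ h2
            · exact hu0r _ h1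
        | succ k' =>
          cases l with
          | zero =>
            have h1 := (hspan' k' (by omega)).1
            have h2 := (hspan' k' (by omega)).2
            refine ⟨hv0l _ h1, ?_, ?_⟩ <;> rw [if_neg (by omega : ¬ k' + 1 = 0)]
            · exact hu0l _ h1
            · exact hv0l _ h2
          | succ l' =>
            obtain ⟨g1, g2, g3⟩ := hgram' k' (by omega) l' (by omega)
            have hif : (if k' + 1 = l' + 1 then (1:F) else 0) = if k' = l' then 1 else 0 := by
              by_cases h : k' = l' <;> simp [h]
            exact ⟨g1, by rw [hif]; exact g2, by rw [hif]; exact g3⟩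
    · -- Case 2: no isotropic vector in the plane of b 0, b 1; use b 2 to fix it
      have hm : 1 ≤ m := by
        by_contra h
        have hm0 : m = 0 := by omega
        subst hm0
        apply hsq
        have : ∏ i ∈ Finset.range (2 * 1), d i = d 1 * d 0 := by
          simpa using hprod
        refine ⟨s, ?_⟩
        rw [← sq]
        rw [this] at hdisc
        linear_combination hdisc
      obtain ⟨m', rfl⟩ : ∃ m', m = m' + 1 := ⟨m - 1, by omega⟩
      have hd2 := hne 2 (by omega)
      have e22 : B (b 2) (b 2) = d 2 := hnorm 2 (by omega)
      have e02 : B (b 0) (b 2) = 0 := horth 0 (by omega) 2 (by omega) (by omega)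
      have e20 : B (b 2) (b 0) = 0 := horth 2 (by omega) 0 (by omega) (by omega)
      have e12 : B (b 1) (b 2) = 0 := horth 1 (by omega) 2 (by omega) (by omega)
      have e21 : B (b 2) (b 1) = 0 := horth 2 (by omega) 1 (by omega) (by omega)
      obtain ⟨x, y, hxy⟩ := hrep (d 1) (d 2) (-(d 0)) hd1 hd2
      set v : V := x • b 1 + y • b 2 with hvdef
      set w : V := (-(d 2 * y)) • b 1 + (d 1 * x) • b 2 with hwdef
      set v0 : V := b 0 + v with hv0def
      have h2d0 : (2 * d 0) ≠ 0 := mul_ne_zero htwo hd0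
      set u0 : V := (2 * d 0)⁻¹ • (b 0 - v) with hu0def
      have hinv2 : (2 * d 0) * (2 * d 0)⁻¹ = 1 := mul_inv_cancel₀ h2d0
      -- values of B on b0, v, w
      have hBvv : B v v = -(d 0) := by
        rw [hvdef]
        simp only [map_add, LinearMap.add_apply, _root_.map_smul, LinearMap.smul_apply,
          smul_eq_mul, e11, e12, e21, e22]
        linear_combination hxy
      have hBvw : B v w = 0 := by
        rw [hvdef, hwdef]
        simp only [map_add, LinearMap.add_apply, _root_.map_smul, LinearMap.smul_apply,
          smul_eq_mul, e11, e12, e21, e22]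
        ring
      have hBwv : B w v = 0 := by
        rw [hvdef, hwdef]
        simp only [map_add, LinearMap.add_apply, _root_.map_smul, LinearMap.smul_apply,
          smul_eq_mul, e11, e12, e21, e22]
        ring
      have hBww : B w w = -(d 0 * d 1 * d 2) := by
        rw [hwdef]
        simp only [map_add, LinearMap.add_apply, _root_.map_smul, LinearMap.smul_apply,
          smul_eq_mul, e11, e12, e21, e22]
        linear_combination (d 1 * d 2) * hxy
      have hB0v : B (b 0) v = 0 := by
        rw [hvdef]
        simp only [map_add, _root_.map_smul, smul_eq_mul, e01, e02]
        ring
      have hBv0' : B v (b 0) = 0 := by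
        rw [hvdef]
        simp only [map_add, LinearMap.add_apply, _root_.map_smul, LinearMap.smul_apply,
          smul_eq_mul, e10, e20]
        ring
      have hB0w : B (b 0) w = 0 := by
        rw [hwdef]
        simp only [map_add, _root_.map_smul, smul_eq_mul, e01, e02]
        ring
      have hBw0 : B w (b 0) = 0 := by
        rw [hwdef]
        simp only [map_add, LinearMap.add_apply, _root_.map_smul, LinearMap.smul_apply,
          smul_eq_mul, e10, e20]
        ring
      -- B of v, w against tail basis vectors
      have hvtail : ∀ i, 3 ≤ i → i < 2 * (m' + 2) → B v (b i) = 0 ∧ B (b i) v = 0 ∧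
          B w (b i) = 0 ∧ B (b i) w = 0 := by
        intro i h3 hi
        have h1i : B (b 1) (b i) = 0 := horth 1 (by omega) i hi (by omega)
        have h2i : B (b 2) (b i) = 0 := horth 2 (by omega) i hi (by omega)
        have hi1 : B (b i) (b 1) = 0 := horth i hi 1 (by omega) (by omega)
        have hi2 : B (b i) (b 2) = 0 := horth i hi 2 (by omega) (by omega)
        refine ⟨?_, ?_, ?_, ?_⟩
        · rw [hvdef]
          simp only [map_add, LinearMap.add_apply, _root_.map_smul, LinearMap.smul_apply,
            smul_eq_mul, h1i, h2i]
          ring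
        · rw [hvdef]
          simp only [map_add, _root_.map_smul, smul_eq_mul, hi1, hi2]
          ring
        · rw [hwdef]
          simp only [map_add, LinearMap.add_apply, _root_.map_smul, LinearMap.smul_apply,
            smul_eq_mul, h1i, h2i]
          ring
        · rw [hwdef]
          simp only [map_add, _root_.map_smul, smul_eq_mul, hi1, hi2]
          ring
      -- the new family
      set b' : ℕ → V := fun i => if i = 0 then w else b (i + 2) with hb'def
      set d' : ℕ → F := fun i => if i = 0 then -(d 0 * d 1 * d 2) else d (i + 2) with hd'def
      have hb'0 : b' 0 = w := rfl
      have hd'0 : d' 0 = -(d 0 * d 1 * d 2) := rfl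
      have hb's : ∀ i, b' (i + 1) = b (i + 3) := by
        intro i; simp only [hb'def]; rw [if_neg (by omega)]
      have hd's : ∀ i, d' (i + 1) = d (i + 3) := by
        intro i; simp only [hd'def]; rw [if_neg (by omega)]
      have hd'ne : -(d 0 * d 1 * d 2) ≠ 0 :=
        neg_ne_zero.2 (mul_ne_zero (mul_ne_zero hd0 hd1) hd2)
      -- product identity
      have hprod3 : ∏ i ∈ Finset.range (2 * (m' + 2)), d i =
          ((((∏ i ∈ Finset.range (2 * m' + 1), d (i + 3)) * d 2) * d 1) * d 0) := by
        rw [show 2 * (m' + 2) = 2 * m' + 3 + 1 by ring, Finset.prod_range_succ' d,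
          Finset.prod_range_succ' (fun i => d (i + 1)), Finset.prod_range_succ']
      have hprod' : ∏ i ∈ Finset.range (2 * (m' + 1)), d' i =
          (∏ i ∈ Finset.range (2 * m' + 1), d (i + 3)) * (-(d 0 * d 1 * d 2)) := by
        rw [show 2 * (m' + 1) = 2 * m' + 1 + 1 by ring, Finset.prod_range_succ' d']
        rw [hd'0]
        congr 1
      obtain ⟨v', u', hspan', hgram'⟩ := IH b' d'
        (by
          intro i hi
          cases i with
          | zero => rw [hb'0, hd'0]; exact hBww
          | succ i' => rw [hb's, hd's]; exact hnorm (i' + 3) (by omega))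
        (by
          intro i hi
          cases i with
          | zero => rw [hd'0]; exact hd'ne
          | succ i' => rw [hd's]; exact hne (i' + 3) (by omega))
        (by
          intro i hi j hj hij
          cases i with
          | zero =>
            cases j with
            | zero => omega
            | succ j' =>
              rw [hb'0, hb's]
              exact (hvtail (j' + 3) (by omega) (by omega)).2.2.1
          | succ i' =>
            cases j with
            | zero =>
              rw [hb'0, hb's]
              exact (hvtail (i' + 3) (by omega) (by omega)).2.2.2
            | succ j' =>
              rw [hb's, hb's]
              exact horth (i' + 3) (by omega) (j' + 3) (by omega) (by omega))
        s hs
        (by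
          rw [hprod']
          rw [hprod3] at hdisc
          rw [pow_succ] at hdisc
          linear_combination hdisc)
      set S' : Set V := b' '' Set.Iio (2 * (m' + 1)) with hS'def
      have hS'S : span F S' ≤ span F (b '' Set.Iio (2 * (m' + 2))) := by
        rw [span_le]
        rintro z ⟨i, hi, rfl⟩
        have hi' : i < 2 * (m' + 1) := hi
        cases i with
        | zero =>
          rw [hb'0, hwdef]
          exact Submodule.add_mem _ (Submodule.smul_mem _ _ (hS 1 (by omega)))
            (Submodule.smul_mem _ _ (hS 2 (by omega)))
        | succ i' =>
          rw [hb's]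
          exact hS (i' + 3) (by omega)
      -- orthogonality of v0, u0 against span S'
      have expand_r : ∀ z : V, B (b 0) z = 0 → B v z = 0 → B v0 z = 0 ∧ B u0 z = 0 := by
        intro z h0 h1
        constructor
        · rw [hv0def]
          simp only [map_add, LinearMap.add_apply, h0, h1]
          ring
        · rw [hu0def]
          simp only [map_sub, LinearMap.sub_apply, _root_.map_smul, LinearMap.smul_apply,
            smul_eq_mul, h0, h1]
          ring
      have expand_l : ∀ z : V, B z (b 0) = 0 → B z v = 0 → B z v0 = 0 ∧ B z u0 = 0 := by
        intro z h0 h1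
        constructor
        · rw [hv0def]
          simp only [map_add, h0, h1]
          ring
        · rw [hu0def]
          simp only [map_sub, _root_.map_smul, smul_eq_mul, h0, h1]
          ring
      have horthb' : ∀ i, i < 2 * (m' + 1) →
          (B (b 0) (b' i) = 0 ∧ B v (b' i) = 0) ∧ (B (b' i) (b 0) = 0 ∧ B (b' i) v = 0) := by
        intro i hi
        cases i with
        | zero => rw [hb'0]; exact ⟨⟨hB0w, hBvw⟩, ⟨hBw0, hBwv⟩⟩
        | succ i' =>
          rw [hb's]
          have h0i : B (b 0) (b (i' + 3)) = 0 :=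
            horth 0 (by omega) (i' + 3) (by omega) (by omega)
          have hi0 : B (b (i' + 3)) (b 0) = 0 :=
            horth (i' + 3) (by omega) 0 (by omega) (by omega)
          obtain ⟨hv1, hv2, _, _⟩ := hvtail (i' + 3) (by omega) (by omega)
          exact ⟨⟨h0i, hv1⟩, ⟨hi0, hv2⟩⟩
      have hv0r : ∀ z ∈ span F S', B v0 z = 0 := by
        apply bilin_zero_right
        rintro z ⟨i, hi, rfl⟩
        have hi' : i < 2 * (m' + 1) := hi
        obtain ⟨⟨h1, h2⟩, _⟩ := horthb' i hi'
        exact (expand_r _ h1 h2).1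
      have hu0r : ∀ z ∈ span F S', B u0 z = 0 := by
        apply bilin_zero_right
        rintro z ⟨i, hi, rfl⟩
        have hi' : i < 2 * (m' + 1) := hi
        obtain ⟨⟨h1, h2⟩, _⟩ := horthb' i hi'
        exact (expand_r _ h1 h2).2
      have hv0l : ∀ z ∈ span F S', B z v0 = 0 := by
        apply bilin_zero_left
        rintro z ⟨i, hi, rfl⟩
        have hi' : i < 2 * (m' + 1) := hi
        obtain ⟨_, ⟨h1, h2⟩⟩ := horthb' i hi'
        exact (expand_l _ h1 h2).1
      have hu0l : ∀ z ∈ span F S', B z u0 = 0 := by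
        apply bilin_zero_left
        rintro z ⟨i, hi, rfl⟩
        have hi' : i < 2 * (m' + 1) := hi
        obtain ⟨_, ⟨h1, h2⟩⟩ := horthb' i hi'
        exact (expand_l _ h1 h2).2
      -- gram of v0, u0
      have gvv : B v0 v0 = 0 := by
        rw [hv0def]
        simp only [map_add, LinearMap.add_apply, e00, hB0v, hBv0', hBvv]
        ring
      have gvu : B v0 u0 = 1 := by
        rw [hv0def, hu0def]
        simp only [map_add, map_sub, LinearMap.add_apply, LinearMap.sub_apply,
          _root_.map_smul, LinearMap.smul_apply, smul_eq_mul, e00, hB0v, hBv0', hBvv]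
        linear_combination hinv2
      have guv : B u0 v0 = 1 := by
        rw [hv0def, hu0def]
        simp only [map_add, map_sub, LinearMap.add_apply, LinearMap.sub_apply,
          _root_.map_smul, LinearMap.smul_apply, smul_eq_mul, e00, hB0v, hBv0', hBvv]
        linear_combination hinv2
      refine ⟨fun k => Nat.casesOn k v0 (fun k' => v' k'),
              fun k => Nat.casesOn k u0 (fun k' => u' k'), ?_, ?_⟩
      · intro k hk
        cases k with
        | zero =>
          have hmemv : v ∈ span F (b '' Set.Iio (2 * (m' + 2))) := by
            rw [hvdef]
            exact Submodule.add_mem _ (Submodule.smul_mem _ _ (hS 1 (by omega)))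
              (Submodule.smul_mem _ _ (hS 2 (by omega)))
          refine ⟨Submodule.add_mem _ (hS 0 (by omega)) hmemv, ?_⟩
          exact Submodule.smul_mem _ _ (Submodule.sub_mem _ (hS 0 (by omega)) hmemv)
        | succ k' =>
          exact ⟨hS'S (hspan' k' (by omega)).1, hS'S (hspan' k' (by omega)).2⟩
      · intro k hk l hl
        cases k with
        | zero =>
          cases l with
          | zero =>
            refine ⟨gvv, ?_, ?_⟩ <;> rw [if_pos rfl]
            · exact gvu
            · exact guv
          | succ l' =>
            have h1 := (hspan' l' (by omega)).1
            have h2 := (hspan' l' (by omega)).2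
            refine ⟨hv0r _ h1, ?_, ?_⟩ <;> rw [if_neg (by omega : ¬ 0 = l' + 1)]
            · exact hv0r _ h2
            · exact hu0r _ h1
        | succ k' =>
          cases l with
          | zero =>
            have h1 := (hspan' k' (by omega)).1
            have h2 := (hspan' k' (by omega)).2
            refine ⟨hv0l _ h1, ?_, ?_⟩ <;> rw [if_neg (by omega : ¬ k' + 1 = 0)]
            · exact hu0l _ h1
            · exact hv0l _ h2
          | succ l' =>
            obtain ⟨g1, g2, g3⟩ := hgram' k' (by omega) l' (by omega)
            have hif : (if k' + 1 = l' + 1 then (1:F) else 0) = if k' = l' then 1 else 0 := by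
              by_cases h : k' = l' <;> simp [h]
            exact ⟨g1, by rw [hif]; exact g2, by rw [hif]; exact g3⟩

end helpers


lemma rep_lemma (p : ℕ) [Fact p.Prime] (hp : Odd p) :
    ∀ a b c : ZMod p, a ≠ 0 → b ≠ 0 → ∃ x y : ZMod p, a * x ^ 2 + b * y ^ 2 = c := by
  intro a b c ha hb
  have hcard : Fintype.card (ZMod p) % 2 = 1 := by
    rw [ZMod.card]; exact Nat.odd_iff.1 hp
  have hf : (C a * X ^ 2 : (ZMod p)[X]).degree = 2 := by
    rw [degree_C_mul_X_pow _ ha]; rfl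
  have hg : (C b * X ^ 2 - C c : (ZMod p)[X]).degree = 2 := by
    rw [sub_eq_add_neg, ← C_neg]
    rw [degree_add_eq_left_of_degree_lt]
    · rw [degree_C_mul_X_pow _ hb]; rfl
    · rw [degree_C_mul_X_pow _ hb]
      exact lt_of_le_of_lt (degree_C_le) (by norm_num)
  obtain ⟨x, y, hxy⟩ := FiniteField.exists_root_sum_quadratic hf hg hcard
  refine ⟨x, y, ?_⟩
  simp only [eval_add, eval_sub, eval_mul, eval_pow, eval_C, eval_X] at hxy
  linear_combination hxy

lemma sign_helper {F : Type*} [Ring F] (m : ℕ) (hm : 1 ≤ m) :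
    (-1 : F) ^ (2 * m * (2 * m - 1) / 2) = (-1) ^ m := by
  have he : 2 * m * (2 * m - 1) / 2 = m * (2 * m - 1) := by
    rw [show 2 * m * (2 * m - 1) = 2 * (m * (2 * m - 1)) by ring,
      Nat.mul_div_cancel_left _ (by norm_num)]
  rw [he]
  rcases Nat.even_or_odd m with h | h
  · rw [(h.mul_right _).neg_one_pow, h.neg_one_pow]
  · have hodd : Odd (m * (2 * m - 1)) := h.mul (Nat.odd_iff.2 (by omega))
    rw [hodd.neg_one_pow, h.neg_one_pow]

lemma gram_entry {F : Type*} [Field F] {n : ℕ} (Q : Matrix (Fin n) (Fin n) F)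
    (bas : Fin n → Fin n → F) (i j : Fin n) :
    ((Matrix.of fun a b => bas b a)ᵀ * Q * Matrix.of fun a b => bas b a) i j
      = dotProduct (bas i) (Q.mulVec (bas j)) := by
  simp only [Matrix.mul_apply, Matrix.transpose_apply, Matrix.of_apply, Finset.sum_mul,
    dotProduct, Matrix.mulVec, Finset.mul_sum]
  rw [Finset.sum_comm]
  exact Finset.sum_congr rfl fun a _ => Finset.sum_congr rfl fun b _ => by ring

lemma detJ {F : Type*} [Field F] (m : ℕ) : (Matrix.fromBlocks (0 : Matrix (Fin m) (Fin m) F)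
    (1 : Matrix (Fin m) (Fin m) F) (1 : Matrix (Fin m) (Fin m) F)
    (0 : Matrix (Fin m) (Fin m) F)).det = (-1) ^ m := by
  classical
  let eq : Fin m ⊕ Fin m ≃ Fin 2 × Fin m :=
    (Equiv.boolProdEquivSum (Fin m)).symm.trans (finTwoEquiv.symm.prodCongr (Equiv.refl (Fin m)))
  have hJ : Matrix.fromBlocks (0 : Matrix (Fin m) (Fin m) F)
      (1 : Matrix (Fin m) (Fin m) F) (1 : Matrix (Fin m) (Fin m) F)
      (0 : Matrix (Fin m) (Fin m) F) =
      ((!![(0:F),1;1,0]) ⊗ₖ (1 : Matrix (Fin m) (Fin m) F)).submatrix eq eq := by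
    ext a b
    rcases a with k | k <;> rcases b with l | l <;>
      simp [eq, Matrix.submatrix_apply, Matrix.kroneckerMap_apply, Matrix.one_apply,
        finTwoEquiv, Equiv.boolProdEquivSum]
  rw [hJ, Matrix.det_submatrix_equiv_self, Matrix.det_kronecker, Matrix.det_one,
    Matrix.det_fin_two_of]
  norm_num

lemma det_fromBlocks_zero11 {F : Type*} [Field F] {m : ℕ} (A B C : Matrix (Fin m) (Fin m) F) :
    (Matrix.fromBlocks 0 A B C).det = (-1) ^ m * A.det * B.det := by
  have key : Matrix.fromBlocks (0 : Matrix (Fin m) (Fin m) F) A B C =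
      Matrix.fromBlocks (0 : Matrix (Fin m) (Fin m) F) (1 : Matrix (Fin m) (Fin m) F)
        (1 : Matrix (Fin m) (Fin m) F) (0 : Matrix (Fin m) (Fin m) F) *
      Matrix.fromBlocks B C 0 A := by
    rw [Matrix.fromBlocks_multiply]
    simp
  rw [key, Matrix.det_mul, detJ, Matrix.det_fromBlocks_zero₂₁]
  ring

section main

theorem rev_dir (p : ℕ) [Fact p.Prime] (hp : Odd p) (n : ℕ) (hn : 1 ≤ n)
    (Q : Matrix (Fin n) (Fin n) (ZMod p)) (hsymm : Q.IsSymm) (hinv : IsUnit Q.det)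
    (hEven : Even n) (c : ZMod p) (hc0 : c ≠ 0)
    (hdisc : (-1 : ZMod p) ^ (n * (n - 1) / 2) * Q.det = c ^ 2) :
    (∃ W : Submodule (ZMod p) (Fin n → ZMod p),
        2 * Module.finrank (ZMod p) W = n ∧
        ∀ x ∈ W, ∀ y ∈ W, dotProduct x (Q.mulVec y) = 0) := by
  obtain ⟨m, hm⟩ := hEven
  have h2m : 2 * m = n := by omega
  have hm1 : 1 ≤ m := by omega
  have htwo : (2 : ZMod p) ≠ 0 := by
    have hp2 : p ≠ 2 := by rintro rfl; exact (by decide : ¬ Odd 2) hp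
    have : ((2 : ℕ) : ZMod p) ≠ 0 := by
      rw [Ne, ZMod.natCast_eq_zero_iff]
      intro h
      exact hp2 ((Nat.prime_dvd_prime_iff_eq (Fact.out) Nat.prime_two).1 h)
    simpa using this
  haveI : Invertible (2 : ZMod p) := invertibleOfNonzero htwo
  have hQdet : Q.det ≠ 0 := by
    intro h; rw [h] at hinv; simpa using hinv
  set Bf := Matrix.toBilin' Q with hBfdef
  have hBfapp : ∀ x y, Bf x y = dotProduct x (Q.mulVec y) :=
    fun x y => Matrix.toBilin'_apply' Q x y
  have hBsymm : LinearMap.IsSymm Bf := by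
    rw [LinearMap.isSymm_def]; intro x y
    simp only [RingHom.id_apply, hBfdef, Matrix.toBilin'_apply']
    rw [dotProduct_mulVec, ← Matrix.mulVec_transpose, hsymm.eq, dotProduct_comm]
  obtain ⟨bas0, hortho0⟩ := LinearMap.BilinForm.exists_orthogonal_basis hBsymm
  have hfr : Module.finrank (ZMod p) (Fin n → ZMod p) = n := Module.finrank_fin_fun _
  set bas : Basis (Fin n) (ZMod p) (Fin n → ZMod p) := bas0.reindex (finCongr hfr) with hbasdef
  have hortho : ∀ i j : Fin n, i ≠ j → Bf (bas i) (bas j) = 0 := by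
    intro i j hij
    simp only [hbasdef, Module.Basis.reindex_apply]
    exact hortho0 (fun h => hij (by
      have := congrArg (finCongr hfr) h
      simpa using this))
  set P : Matrix (Fin n) (Fin n) (ZMod p) := Matrix.of fun a b => bas b a with hPdef
  have hPunit : IsUnit P.det := by
    have h : P = (Pi.basisFun (ZMod p) (Fin n)).toMatrix bas := by
      ext i j
      simp [hPdef, Basis.toMatrix_apply]
    rw [h]
    haveI := (Pi.basisFun (ZMod p) (Fin n)).invertibleToMatrix bas
    exact Matrix.isUnit_det_of_invertible _
  have hPne : P.det ≠ 0 := by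
    intro h; rw [h] at hPunit; simpa using hPunit
  set G := Pᵀ * Q * P with hGdef
  have hGentry : ∀ i j, G i j = Bf (bas i) (bas j) := by
    intro i j
    rw [hGdef, hPdef, gram_entry Q (fun i => bas i) i j, hBfapp]
  set dd : Fin n → ZMod p := fun i => Bf (bas i) (bas i) with hdddef
  have hGdiag : G = Matrix.diagonal dd := by
    ext i j
    by_cases h : i = j
    · subst h; rw [hGentry]; simp [hdddef]
    · rw [hGentry, Matrix.diagonal_apply_ne _ h]
      exact hortho i j h
  have hGdet : (∏ i, dd i) = P.det ^ 2 * Q.det := by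
    have h1 : G.det = P.det * Q.det * P.det := by
      rw [hGdef, Matrix.det_mul, Matrix.det_mul, Matrix.det_transpose]
    rw [hGdiag, Matrix.det_diagonal] at h1
    rw [h1]; ring
  have hddne : ∀ i, dd i ≠ 0 := by
    intro i h
    have : (∏ i, dd i) = 0 := Finset.prod_eq_zero (Finset.mem_univ i) h
    rw [hGdet] at this
    exact (mul_ne_zero (pow_ne_zero _ hPne) hQdet) this
  set bnat : ℕ → (Fin n → ZMod p) := fun i => if h : i < n then bas ⟨i, h⟩ else 0 with hbnat
  set dnat : ℕ → ZMod p := fun i => if h : i < n then dd ⟨i, h⟩ else 1 with hdnat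
  have hbeq : ∀ i (h : i < 2 * m), bnat i = bas ⟨i, h2m ▸ h⟩ := by
    intro i h; rw [hbnat]; simp only; rw [dif_pos]
  have hdeq : ∀ i (h : i < 2 * m), dnat i = dd ⟨i, h2m ▸ h⟩ := by
    intro i h; rw [hdnat]; simp only; rw [dif_pos]
  have hprodn : ∏ i ∈ Finset.range (2 * m), dnat i = ∏ i, dd i := by
    rw [h2m, ← Fin.prod_univ_eq_prod_range]
    exact Finset.prod_congr rfl fun i _ => by
      rw [hdnat]; simp only; rw [dif_pos i.isLt, Fin.eta]
  have hsgn : (-1 : ZMod p) ^ (n * (n - 1) / 2) = (-1 : ZMod p) ^ m := by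
    rw [← h2m]
    exact sign_helper m hm1
  rw [hsgn] at hdisc
  obtain ⟨v, u, hspan, hgram⟩ := lemB Bf htwo (rep_lemma p hp) m bnat dnat
    (fun i hi => by rw [hbeq i hi, hdeq i hi])
    (fun i hi => by rw [hdeq i hi]; exact hddne _)
    (fun i hi j hj hij => by
      rw [hbeq i hi, hbeq j hj]
      exact hortho _ _ (by simpa using hij))
    (c * P.det) (mul_ne_zero hc0 hPne)
    (by
      rw [hprodn]
      linear_combination P.det ^ 2 * hdisc + (-1 : ZMod p) ^ m * hGdet)
  refine ⟨Submodule.span (ZMod p) (Set.range fun k : Fin m => v k), ?_, ?_⟩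
  · have li : LinearIndependent (ZMod p) (fun k : Fin m => v k) := by
      rw [Fintype.linearIndependent_iff]
      intro g hg l
      have h1 := congrArg (fun z => Bf z (u l)) hg
      simp only [map_sum, LinearMap.sum_apply, LinearMap.coe_sum, map_zero,
        LinearMap.zero_apply, _root_.map_smul, LinearMap.smul_apply, smul_eq_mul] at h1
      have h2 : ∀ k : Fin m, g k * Bf (v ↑k) (u ↑l) = if k = l then g k else 0 := by
        intro k
        rw [(hgram ↑k k.isLt ↑l l.isLt).2.1]
        by_cases h : k = l
        · subst h; rw [if_pos rfl, if_pos rfl, mul_one]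
        · rw [if_neg h, if_neg (fun hh => h (Fin.ext hh)), mul_zero]
      rw [Finset.sum_congr rfl (fun k _ => h2 k), Finset.sum_ite_eq' Finset.univ l g] at h1
      simpa using h1
    rw [finrank_span_eq_card li, Fintype.card_fin]
    exact h2m
  · intro x hx y hy
    have key : Bf x y = 0 := by
      refine bilin_zero_left Bf y ?_ x hx
      intro z ⟨k, hk⟩
      refine bilin_zero_right Bf z ?_ y hy
      intro z' ⟨k', hk'⟩
      rw [← hk, ← hk']
      exact (hgram ↑k k.isLt ↑k' k'.isLt).1
    rw [hBfapp] at key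
    exact key


theorem fwd_dir (p : ℕ) [Fact p.Prime] (hp : Odd p) (n : ℕ) (hn : 1 ≤ n)
    (Q : Matrix (Fin n) (Fin n) (ZMod p)) (hsymm : Q.IsSymm) (hinv : IsUnit Q.det)
    (W : Submodule (ZMod p) (Fin n → ZMod p))
    (hWrank : 2 * Module.finrank (ZMod p) W = n)
    (hiso : ∀ x ∈ W, ∀ y ∈ W, dotProduct x (Q.mulVec y) = 0) :
    (Even n ∧ ∃ c : ZMod p, c ≠ 0 ∧
        (-1 : ZMod p) ^ (n * (n - 1) / 2) * Q.det = c ^ 2) := by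
  have hQdet : Q.det ≠ 0 := by
    intro h; rw [h] at hinv; simp at hinv
  set mm := Module.finrank (ZMod p) W with hmm
  refine ⟨⟨mm, by omega⟩, ?_⟩
  have hm1 : 1 ≤ mm := by omega
  have hfr : Module.finrank (ZMod p) (Fin n → ZMod p) = n := Module.finrank_fin_fun _
  obtain ⟨W', hcompl⟩ := Submodule.exists_isCompl W
  have hW' : Module.finrank (ZMod p) W' = mm := by
    have := Submodule.finrank_add_eq_of_isCompl hcompl
    rw [hfr] at this
    omega
  set bW : Basis (Fin mm) (ZMod p) W := Module.finBasis (ZMod p) W with hbW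
  set bW2 : Basis (Fin mm) (ZMod p) W' :=
    (Module.finBasis (ZMod p) W').reindex (finCongr hW') with hbW2
  set bSum : Basis (Fin mm ⊕ Fin mm) (ZMod p) (Fin n → ZMod p) :=
    (bW.prod bW2).map (Submodule.prodEquivOfIsCompl W W' hcompl) with hbSum
  have hinW : ∀ k, bSum (Sum.inl k) ∈ W := by
    intro k
    rw [hbSum]
    simp only [Basis.map_apply, Basis.prod_apply, Sum.elim_inl, Function.comp_apply,
      LinearMap.coe_inl, Submodule.coe_prodEquivOfIsCompl, LinearMap.coprod_apply,
      Submodule.coe_subtype, ZeroMemClass.coe_zero, add_zero,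
      Submodule.coe_prodEquivOfIsCompl']
    simpa using (bW k).2
  set e : Fin mm ⊕ Fin mm ≃ Fin n := finSumFinEquiv.trans (finCongr (by omega)) with hedef
  set bas : Basis (Fin n) (ZMod p) (Fin n → ZMod p) := bSum.reindex e with hbas
  set P : Matrix (Fin n) (Fin n) (ZMod p) := Matrix.of fun a b => bas b a with hPdef
  have hPunit : IsUnit P.det := by
    have h : P = (Pi.basisFun (ZMod p) (Fin n)).toMatrix bas := by
      ext i j
      simp [hPdef, Basis.toMatrix_apply]
    rw [h]
    haveI := (Pi.basisFun (ZMod p) (Fin n)).invertibleToMatrix bas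
    exact Matrix.isUnit_det_of_invertible _
  have hPne : P.det ≠ 0 := by
    intro h; rw [h] at hPunit; simp at hPunit
  set G := Pᵀ * Q * P with hGdef
  have hGentry : ∀ i j, G i j = dotProduct (bas i) (Q.mulVec (bas j)) := by
    intro i j
    rw [hGdef, hPdef, gram_entry Q (fun i => bas i) i j]
  have hGdet : G.det = P.det ^ 2 * Q.det := by
    rw [hGdef, Matrix.det_mul, Matrix.det_mul, Matrix.det_transpose]; ring
  have hGsymm : Gᵀ = G := by
    rw [hGdef, Matrix.transpose_mul, Matrix.transpose_mul, Matrix.transpose_transpose,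
      hsymm.eq, Matrix.mul_assoc]
  set H := G.submatrix e e with hHdef
  have hHsymm : Hᵀ = H := by
    rw [hHdef, Matrix.transpose_submatrix, hGsymm]
  have hHdet : H.det = G.det := Matrix.det_submatrix_equiv_self e G
  have h11 : H.toBlocks₁₁ = 0 := by
    ext k l
    show H (Sum.inl k) (Sum.inl l) = 0
    rw [hHdef, Matrix.submatrix_apply, hGentry]
    have hb : ∀ k, bas (e (Sum.inl k)) = bSum (Sum.inl k) := by
      intro k; rw [hbas, Module.Basis.reindex_apply, Equiv.symm_apply_apply]
    rw [hb, hb]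
    exact hiso _ (hinW k) _ (hinW l)
  have h21 : H.toBlocks₂₁ = (H.toBlocks₁₂)ᵀ := by
    ext k l
    show H (Sum.inr k) (Sum.inl l) = H (Sum.inl l) (Sum.inr k)
    conv_lhs => rw [← hHsymm]
    rfl
  have hblocks : H = Matrix.fromBlocks 0 H.toBlocks₁₂ (H.toBlocks₁₂)ᵀ H.toBlocks₂₂ := by
    conv_lhs => rw [← Matrix.fromBlocks_toBlocks H]
    rw [h11, h21]
  set A := H.toBlocks₁₂ with hA
  have hHdet2 : H.det = (-1 : ZMod p) ^ mm * A.det * A.det := by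
    rw [hblocks, det_fromBlocks_zero11, Matrix.det_transpose]
  have hAne : A.det ≠ 0 := by
    intro h
    have h0 : P.det ^ 2 * Q.det = 0 := by
      rw [← hGdet, ← hHdet, hHdet2, h]; ring
    exact (mul_ne_zero (pow_ne_zero _ hPne) hQdet) h0
  have hsgn : (-1 : ZMod p) ^ (n * (n - 1) / 2) = (-1 : ZMod p) ^ mm := by
    rw [show n = 2 * mm by omega]
    exact sign_helper mm hm1
  refine ⟨A.det * (P.det)⁻¹, mul_ne_zero hAne (inv_ne_zero hPne), ?_⟩
  rw [hsgn]
  have hkey : (-1 : ZMod p) ^ mm * A.det * A.det = P.det ^ 2 * Q.det := by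
    rw [← hHdet2, hHdet, hGdet]
  have hPinv : P.det * (P.det)⁻¹ = 1 := mul_inv_cancel₀ hPne
  have hsq1 : ((-1 : ZMod p) ^ mm) * ((-1 : ZMod p) ^ mm) = 1 := by
    rw [← pow_add]
    exact Even.neg_one_pow ⟨mm, rfl⟩
  linear_combination (-((-1 : ZMod p) ^ mm * (P.det⁻¹) ^ 2)) * hkey +
    (-((-1 : ZMod p) ^ mm * Q.det * (P.det * P.det⁻¹ + 1))) * hPinv +
    (A.det ^ 2 * (P.det⁻¹) ^ 2) * hsq1


end main

/-- For an odd prime `p` and an invertible symmetric `n × n` matrix `Q` over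
`F_p` (`n ≥ 1`), the bilinear form `B(x,y) = xᵀQy` on `(F_p)ⁿ` is metabolic (vanishes on a
subspace of half dimension) iff `n` is even and `(-1)^(n(n-1)/2) · det Q` is a nonzero square. -/
theorem stmt_0 (p : ℕ) [Fact p.Prime] (hp : Odd p) (n : ℕ) (hn : 1 ≤ n)
    (Q : Matrix (Fin n) (Fin n) (ZMod p)) (hsymm : Q.IsSymm) (hinv : IsUnit Q.det) :
    (∃ W : Submodule (ZMod p) (Fin n → ZMod p),
        2 * Module.finrank (ZMod p) W = n ∧
        ∀ x ∈ W, ∀ y ∈ W, dotProduct x (Q.mulVec y) = 0) ↔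
      (Even n ∧ ∃ c : ZMod p, c ≠ 0 ∧
        (-1 : ZMod p) ^ (n * (n - 1) / 2) * Q.det = c ^ 2) := by
  constructor
  · rintro ⟨W, hWrank, hiso⟩
    exact fwd_dir p hp n hn Q hsymm hinv W hWrank hiso
  · rintro ⟨hEven, c, hc0, hdisc⟩
    exact rev_dir p hp n hn Q hsymm hinv hEven c hc0 hdisc
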